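/- Let ω₁, ω₂ > 0 with ω₁ ≠ ω₂ and let φ₁, φ₂ ∈ ℝ. Then for all reals u ≤ v, |∫_u^v sin(ω₁ t + φ₁)·sin(ω₂ t + φ₂) dt| ≤ 2/|ω₁ − ω₂|. -/
import Mathlib


open Real

lemma cos_integral_bound (a b u v : ℝ) (ha : a ≠ 0) :
    |∫ t in u..v, Real.cos (a * t + b)| ≤ 2 / |a| := by
  rw [intervalIntegral.integral_comp_mul_add Real.cos ha b, integral_cos, smul_eq_mul,
    abs_mul, abs_inv]
  rw [div_eq_inv_mul]
  gcongr
  calc |Real.sin (a * v + b) - Real.sin (a * u + b)|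
      ≤ |Real.sin (a * v + b)| + |Real.sin (a * u + b)| := abs_sub _ _
    _ ≤ 1 + 1 := by gcongr <;> exact Real.abs_sin_le_one _
    _ = 2 := by norm_num

/-- Lemma (Trig): the integral of a product of two sines with distinct positive
frequencies over any interval is `O(1/|ω₁ - ω₂|)`, with explicit constant 2. -/
theorem integral_sin_mul_sin_bound (ω₁ ω₂ : ℝ) (hω₁ : 0 < ω₁) (hω₂ : 0 < ω₂)
    (hne : ω₁ ≠ ω₂) (φ₁ φ₂ : ℝ) (u v : ℝ) (huv : u ≤ v) :
    |∫ t in u..v, Real.sin (ω₁ * t + φ₁) * Real.sin (ω₂ * t + φ₂)| ≤ 2 / |ω₁ - ω₂| := by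
  have key : ∀ t : ℝ, Real.sin (ω₁ * t + φ₁) * Real.sin (ω₂ * t + φ₂) =
      (Real.cos ((ω₁ - ω₂) * t + (φ₁ - φ₂)) - Real.cos ((ω₁ + ω₂) * t + (φ₁ + φ₂))) / 2 := by
    intro t
    have h1 : (ω₁ - ω₂) * t + (φ₁ - φ₂) = (ω₁ * t + φ₁) - (ω₂ * t + φ₂) := by ring
    have h2 : (ω₁ + ω₂) * t + (φ₁ + φ₂) = (ω₁ * t + φ₁) + (ω₂ * t + φ₂) := by ring
    rw [h1, h2, Real.cos_sub, Real.cos_add (ω₁ * t + φ₁) (ω₂ * t + φ₂)]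
    ring
  have hc1 : IntervalIntegrable (fun t => Real.cos ((ω₁ - ω₂) * t + (φ₁ - φ₂)))
      MeasureTheory.volume u v :=
    (Real.continuous_cos.comp (by continuity)).intervalIntegrable u v
  have hc2 : IntervalIntegrable (fun t => Real.cos ((ω₁ + ω₂) * t + (φ₁ + φ₂)))
      MeasureTheory.volume u v :=
    (Real.continuous_cos.comp (by continuity)).intervalIntegrable u v
  simp only [key]
  rw [intervalIntegral.integral_div, intervalIntegral.integral_sub hc1 hc2]
  have hd : ω₁ - ω₂ ≠ 0 := sub_ne_zero.mpr hne
  have hs : ω₁ + ω₂ ≠ 0 := by positivity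
  have b1 := cos_integral_bound (ω₁ - ω₂) (φ₁ - φ₂) u v hd
  have b2 := cos_integral_bound (ω₁ + ω₂) (φ₁ + φ₂) u v hs
  have hle : |ω₁ - ω₂| ≤ |ω₁ + ω₂| := by
    rw [abs_of_pos (by positivity : (0:ℝ) < ω₁ + ω₂)]
    calc |ω₁ - ω₂| ≤ |ω₁| + |ω₂| := abs_sub _ _
      _ = ω₁ + ω₂ := by rw [abs_of_pos hω₁, abs_of_pos hω₂]
  have b2' : |∫ t in u..v, Real.cos ((ω₁ + ω₂) * t + (φ₁ + φ₂))| ≤ 2 / |ω₁ - ω₂| := by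
    refine b2.trans ?_
    gcongr
  calc |((∫ t in u..v, Real.cos ((ω₁ - ω₂) * t + (φ₁ - φ₂))) -
          ∫ t in u..v, Real.cos ((ω₁ + ω₂) * t + (φ₁ + φ₂))) / 2|
      ≤ (|∫ t in u..v, Real.cos ((ω₁ - ω₂) * t + (φ₁ - φ₂))| +
         |∫ t in u..v, Real.cos ((ω₁ + ω₂) * t + (φ₁ + φ₂))|) / 2 := by
        rw [abs_div, abs_two]
        gcongr
        exact abs_sub _ _
    _ ≤ (2 / |ω₁ - ω₂| + 2 / |ω₁ - ω₂|) / 2 := by gcongr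
    _ = 2 / |ω₁ - ω₂| := by ring
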